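/- Let E be a real normed space, Inv ⊆ E, and let V₁, …, V_k : E → ℝ (indexed by Fin k) be functions such that for each i there exist class K∞ functions α_i and β_i with α_i ‖x‖ ≤ V_i x ≤ β_i ‖x‖ for all x ∈ Inv. Then for any nonnegative reals λ₁, …, λ_k with at least one λ_i strictly positive, there exist class K∞ functions α and β such that the conical combination W = ∑ i, λ_i • V_i satisfies α ‖x‖ ≤ W x ≤ β ‖x‖ for all x ∈ Inv (one may take α = ∑ i, λ_i • α_i and β = ∑ i, λ_i • β_i). -/

import Mathlib

open Filter

/-- A function `α : ℝ → ℝ` is of class K∞. -/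
def ClassKInf (α : ℝ → ℝ) : Prop :=
  Continuous α ∧ α 0 = 0 ∧ StrictMonoOn α (Set.Ici (0 : ℝ)) ∧
    Tendsto α atTop atTop

lemma classKInf_conical {k : ℕ} (α : Fin k → ℝ → ℝ) (hαK : ∀ i, ClassKInf (α i))
    (lam : Fin k → ℝ) (hnn : ∀ i, 0 ≤ lam i) (hpos : ∃ i, 0 < lam i) :
    ClassKInf (fun r => ∑ i, lam i • α i r) := by
  obtain ⟨j, hj⟩ := hpos
  have hmono : ∀ i, ∀ x ∈ Set.Ici (0:ℝ), ∀ y ∈ Set.Ici (0:ℝ), x ≤ y →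
      lam i • α i x ≤ lam i • α i y := by
    intro i x hx y hy hxy
    exact smul_le_smul_of_nonneg_left ((hαK i).2.2.1.monotoneOn hx hy hxy) (hnn i)
  refine ⟨?_, ?_, ?_, ?_⟩
  · exact continuous_finset_sum _ fun i _ => (continuous_const_smul (lam i)).comp (hαK i).1
  · simp [(hαK · |>.2.1)]
  · intro x hx y hy hxy
    have h1 : ∀ i ∈ Finset.univ, lam i • α i x ≤ lam i • α i y :=
      fun i _ => hmono i x hx y hy hxy.le
    have h2 : lam j • α j x < lam j • α j y :=
      smul_lt_smul_of_pos_left ((hαK j).2.2.1 hx hy hxy) hj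
    exact Finset.sum_lt_sum h1 ⟨j, Finset.mem_univ j, h2⟩
  · have htop : Tendsto (fun r => lam j • α j r) atTop atTop :=
      (tendsto_const_mul_atTop_of_pos hj).2 (hαK j).2.2.2
    refine tendsto_atTop_mono' _ ?_ htop
    filter_upwards [eventually_ge_atTop (0:ℝ)] with r hr
    have : ∀ i ∈ Finset.univ \ {j}, 0 ≤ lam i • α i r := by
      intro i _
      have h0 : α i 0 ≤ α i r := (hαK i).2.2.1.monotoneOn (le_refl (0:ℝ)) hr hr
      rw [(hαK i).2.1] at h0
      exact smul_nonneg (hnn i) h0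
    calc lam j • α j r = ∑ i ∈ {j}, lam i • α i r := by simp
      _ ≤ ∑ i, lam i • α i r :=
        Finset.sum_le_sum_of_subset_of_nonneg (Finset.subset_univ _)
          (fun i hi hni => this i (Finset.mem_sdiff.2 ⟨hi, hni⟩))

/-- conical combinations of functions satisfying the K∞
sandwich bound on an invariant set again satisfy such a bound, with the
conical combinations of the bounding functions as witnesses. -/
theorem sandwich_conical_combination
    {E : Type*} [NormedAddCommGroup E] [NormedSpace ℝ E]
    (Inv : Set E) {k : ℕ}
    (V : Fin k → E → ℝ)
    (α β : Fin k → ℝ → ℝ)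
    (hαK : ∀ i, ClassKInf (α i)) (hβK : ∀ i, ClassKInf (β i))
    (hbound : ∀ i, ∀ x ∈ Inv, α i ‖x‖ ≤ V i x ∧ V i x ≤ β i ‖x‖)
    (lam : Fin k → ℝ) (hnn : ∀ i, 0 ≤ lam i) (hpos : ∃ i, 0 < lam i) :
    ∃ a b : ℝ → ℝ, ClassKInf a ∧ ClassKInf b ∧
      (a = fun r => ∑ i, lam i • α i r) ∧
      (b = fun r => ∑ i, lam i • β i r) ∧
      ∀ x ∈ Inv,
        a ‖x‖ ≤ (∑ i, lam i • V i x) ∧ (∑ i, lam i • V i x) ≤ b ‖x‖ := by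
  refine ⟨_, _, classKInf_conical α hαK lam hnn hpos,
    classKInf_conical β hβK lam hnn hpos, rfl, rfl, fun x hx => ⟨?_, ?_⟩⟩
  · exact Finset.sum_le_sum fun i _ =>
      smul_le_smul_of_nonneg_left (hbound i x hx).1 (hnn i)
  · exact Finset.sum_le_sum fun i _ =>
      smul_le_smul_of_nonneg_left (hbound i x hx).2 (hnn i)
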